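/- Let τ > 0 be real, α₁, β₁, γ₁ ∈ ℂ with γ₂ := γ₁·e^{−α₁τ} ≠ 0, and let L ∈ ℂ with e^{L} = γ₂ and L ≠ 0. Set β₂ = β₁·e^{−α₁}, σ = 1/L, c = (β₂/γ₂)·exp( ((τ−1)/τ)·(L + Log τ + Log(1/L)) ), and μ = (Log τ + Log(1/L))/L − c, where Log denotes the principal branch of the complex logarithm. If v ∈ ℂ satisfies e^{−v} + c·e^{−v/τ} − σv − 1 − c − μ = 0, then s := (L + Log τ + Log(1/L) + v)/τ + α₁ satisfies the two-lag characteristic equation s = α₁ + β₁·e^{−s} + γ₁·e^{−sτ}. -/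

import Mathlib

/-- Let `τ > 0`, `γ₂ := γ₁·e^{−α₁τ} ≠ 0`, and `L` a nonzero
branch of the logarithm of `γ₂`. With `β₂ = β₁·e^{−α₁}`, `σ = 1/L`,
`c = (β₂/γ₂)·exp(((τ−1)/τ)·(L + Log τ + Log(1/L)))`, and
`μ = (Log τ + Log(1/L))/L − c`, if `v` satisfies
`e^{−v} + c·e^{−v/τ} − σv − 1 − c − μ = 0`, then
`s := (L + Log τ + Log(1/L) + v)/τ + α₁` satisfies the two-lag characteristic
equation `s = α₁ + β₁·e^{−s} + γ₁·e^{−sτ}`. -/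
theorem two_lag_root_from_v
    (τ : ℝ) (hτ : 0 < τ) (α₁ β₁ γ₁ : ℂ)
    (γ₂ : ℂ) (hγ₂def : γ₂ = γ₁ * Complex.exp (-(α₁ * τ))) (hγ₂ : γ₂ ≠ 0)
    (L : ℂ) (hL : Complex.exp L = γ₂) (hL0 : L ≠ 0)
    (β₂ σ c μ : ℂ)
    (hβ₂ : β₂ = β₁ * Complex.exp (-α₁))
    (hσ : σ = 1 / L)
    (hc : c = (β₂ / γ₂) *
      Complex.exp ((((τ : ℂ) - 1) / τ) * (L + Complex.log τ + Complex.log (1 / L))))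
    (hμ : μ = (Complex.log τ + Complex.log (1 / L)) / L - c)
    (v : ℂ)
    (hv : Complex.exp (-v) + c * Complex.exp (-v / τ) - σ * v - 1 - c - μ = 0)
    (s : ℂ)
    (hs : s = (L + Complex.log τ + Complex.log (1 / L) + v) / τ + α₁) :
    s = α₁ + β₁ * Complex.exp (-s) + γ₁ * Complex.exp (-(s * τ)) := by
  have hτ0 : (τ : ℂ) ≠ 0 := by exact_mod_cast hτ.ne'
  have hτexp : Complex.exp (Complex.log τ) = τ := Complex.exp_log hτ0
  have hLinv : Complex.exp (Complex.log (1 / L)) = 1 / L :=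
    Complex.exp_log (by simpa using hL0)
  set A : ℂ := L + Complex.log τ + Complex.log (1 / L) with hA
  have hexpA : Complex.exp A = γ₂ * τ * (1 / L) := by
    rw [hA, Complex.exp_add, Complex.exp_add, hL, hτexp, hLinv]
  -- γ₂ * exp(-A) = L / τ
  have hkey : γ₂ * Complex.exp (-A) = L / τ := by
    rw [Complex.exp_neg, hexpA]
    field_simp
  -- Step: γ₁ * exp(-(s*τ)) = (L/τ) * exp(-v)
  have h1 : γ₁ * Complex.exp (-(s * τ)) = (L / τ) * Complex.exp (-v) := by
    have hst : -(s * τ) = -A + -v + -(α₁ * τ) := by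
      rw [hs]; field_simp; ring
    rw [hst, Complex.exp_add, Complex.exp_add]
    have : γ₁ * (Complex.exp (-A) * Complex.exp (-v) * Complex.exp (-(α₁ * τ)))
        = (γ₂ * Complex.exp (-A)) * Complex.exp (-v) := by
      rw [hγ₂def]; ring
    rw [this, hkey]
  -- Step: β₂ * exp(-A/τ) = c * (L/τ)
  have h2 : β₂ * Complex.exp (-A / τ) = c * (L / τ) := by
    have hcA : (((τ : ℂ) - 1) / τ) * A = A + (-A / τ) := by
      field_simp; ring
    rw [hc, hcA, Complex.exp_add]
    field_simp [← hkey, Complex.exp_neg]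
    rw [hexpA]; field_simp
  -- Step: β₁ * exp(-s) = c * (L/τ) * exp(-v/τ)
  have h3 : β₁ * Complex.exp (-s) = c * (L / τ) * Complex.exp (-v / τ) := by
    have hss : -s = -A / τ + -v / τ + -α₁ := by
      rw [hs]; field_simp; ring
    rw [hss, Complex.exp_add, Complex.exp_add]
    have : β₁ * (Complex.exp (-A / τ) * Complex.exp (-v / τ) * Complex.exp (-α₁))
        = (β₂ * Complex.exp (-A / τ)) * Complex.exp (-v / τ) := by
      rw [hβ₂]; ring
    rw [this, h2]
  -- Step: exp(-v) + c * exp(-v/τ) = (A + v) / L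
  have h4 : Complex.exp (-v) + c * Complex.exp (-v / τ) = (A + v) / L := by
    have := hv
    rw [hσ, hμ] at this
    have h5 : Complex.exp (-v) + c * Complex.exp (-v / τ)
        = 1 / L * v + 1 + (Complex.log τ + Complex.log (1 / L)) / L := by
      linear_combination this
    rw [h5, hA]; field_simp; ring
  calc s = α₁ + (L / τ) * ((A + v) / L) := by
        rw [hs]; field_simp; ring
    _ = α₁ + (L / τ) * (Complex.exp (-v) + c * Complex.exp (-v / τ)) := by rw [h4]
    _ = α₁ + β₁ * Complex.exp (-s) + γ₁ * Complex.exp (-(s * τ)) := by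
        rw [h1, h3]; ring
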